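/- If F' is a satisfiable CNF formula sharing no variables with F, then a clause c of F is superredundant in F if and only if it is superredundant in F ∪ F'. -/
import Mathlib


abbrev Lit : Type := ℕ × Bool
abbrev Clause : Type := Finset Lit
abbrev Cnf : Type := Finset Clause

def Lit.negate (l : Lit) : Lit := (l.1, !l.2)

def litSat (M : ℕ → Bool) (l : Lit) : Prop := M l.1 = l.2

def clauseSat (M : ℕ → Bool) (c : Clause) : Prop := ∃ l ∈ c, litSat M l

def cnfSat (M : ℕ → Bool) (F : Cnf) : Prop := ∀ c ∈ F, clauseSat M c

def ClTaut (c : Clause) : Prop := ∃ v : ℕ, (v, true) ∈ c ∧ (v, false) ∈ c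

def cnfVars (F : Cnf) : Set ℕ := {v | ∃ c ∈ F, ∃ b, (v, b) ∈ c}

def isResolvent (c1 c2 r : Clause) (v : ℕ) : Prop :=
  (v, true) ∈ c1 ∧ (v, false) ∈ c2 ∧
    r = c1.erase (v, true) ∪ c2.erase (v, false)

inductive Deriv (F : Set Clause) : Clause → Prop
  | base {c : Clause} : c ∈ F → Deriv F c
  | step {c1 c2 r : Clause} {v : ℕ} : Deriv F c1 → Deriv F c2 →
      isResolvent c1 c2 r v → ¬ ClTaut r → Deriv F r

def ResCn (F : Set Clause) : Set Clause := {c | Deriv F c}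

def setSat (M : ℕ → Bool) (S : Set Clause) : Prop := ∀ c ∈ S, clauseSat M c

def setEntails (S : Set Clause) (c : Clause) : Prop :=
  ∀ M, setSat M S → clauseSat M c

def superRedundant (F : Cnf) (c : Clause) : Prop :=
  setEntails (ResCn ↑F \ {c}) c

def cnfSize (F : Cnf) : ℕ := ∑ c ∈ F, c.card

def cnfEquiv (F G : Cnf) : Prop := ∀ M, cnfSat M F ↔ cnfSat M G

lemma resolvent_sat {c1 c2 r : Clause} {v : ℕ} {M : ℕ → Bool}
    (hres : isResolvent c1 c2 r v) (h1 : clauseSat M c1) (h2 : clauseSat M c2) :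
    clauseSat M r := by
  obtain ⟨hv1, hv2, hr⟩ := hres
  by_cases hMv : M v = true
  · obtain ⟨l, hl, hls⟩ := h2
    refine ⟨l, ?_, hls⟩
    rw [hr]
    apply Finset.mem_union_right
    refine Finset.mem_erase.mpr ⟨?_, hl⟩
    rintro rfl
    exact absurd hls (by simp [litSat, hMv])
  · obtain ⟨l, hl, hls⟩ := h1
    refine ⟨l, ?_, hls⟩
    rw [hr]
    apply Finset.mem_union_left
    refine Finset.mem_erase.mpr ⟨?_, hl⟩
    rintro rfl
    exact absurd hls (by simp [litSat, hMv])

lemma deriv_sound {S : Set Clause} {M : ℕ → Bool} (h : setSat M S) :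
    ∀ {d : Clause}, Deriv S d → clauseSat M d := by
  intro d hd
  induction hd with
  | base hc => exact h _ hc
  | step h1 h2 hres hnt ih1 ih2 => exact resolvent_sat hres ih1 ih2

lemma deriv_mono {S T : Set Clause} (hST : S ⊆ T) :
    ∀ {d : Clause}, Deriv S d → Deriv T d := by
  intro d hd
  induction hd with
  | base hc => exact Deriv.base (hST hc)
  | step h1 h2 hres hnt ih1 ih2 => exact Deriv.step ih1 ih2 hres hnt

lemma deriv_vars {G : Cnf} :
    ∀ {d : Clause}, Deriv ↑G d → ∀ v b, (v, b) ∈ d → v ∈ cnfVars G := by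
  intro d hd
  induction hd with
  | base hc =>
    intro v b hvb
    exact ⟨_, hc, b, hvb⟩
  | step h1 h2 hres hnt ih1 ih2 =>
    intro v b hvb
    obtain ⟨hv1, hv2, hr⟩ := hres
    rw [hr] at hvb
    rcases Finset.mem_union.mp hvb with h | h
    · exact ih1 v b (Finset.mem_of_mem_erase h)
    · exact ih2 v b (Finset.mem_of_mem_erase h)

lemma deriv_split {F F' : Cnf} (hdisj : Disjoint (cnfVars F) (cnfVars F')) :
    ∀ {d : Clause}, Deriv ↑(F ∪ F') d → Deriv ↑F d ∨ Deriv ↑F' d := by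
  intro d hd
  induction hd with
  | base hc =>
    rcases Finset.mem_union.mp hc with h | h
    · exact Or.inl (Deriv.base h)
    · exact Or.inr (Deriv.base h)
  | @step c1 c2 r v h1 h2 hres hnt ih1 ih2 =>
    obtain ⟨hv1, hv2, hr⟩ := hres
    rcases ih1 with hd1 | hd1 <;> rcases ih2 with hd2 | hd2
    · exact Or.inl (Deriv.step hd1 hd2 ⟨hv1, hv2, hr⟩ hnt)
    · exact (Set.disjoint_left.mp hdisj (deriv_vars hd1 v true hv1)
        (deriv_vars hd2 v false hv2)).elim
    · exact (Set.disjoint_left.mp hdisj (deriv_vars hd2 v false hv2)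
        (deriv_vars hd1 v true hv1)).elim
    · exact Or.inr (Deriv.step hd1 hd2 ⟨hv1, hv2, hr⟩ hnt)

/-- If `F'` is satisfiable and shares no variables with `F`, a clause `c` of
`F` is superredundant in `F` iff it is superredundant in `F ∪ F'`. -/
theorem stmt19 (F F' : Cnf) (c : Clause) (hc : c ∈ F)
    (hNT : ∀ d ∈ F, ¬ ClTaut d) (hNT' : ∀ d ∈ F', ¬ ClTaut d)
    (hdisj : Disjoint (cnfVars F) (cnfVars F'))
    (hsat : ∃ M, cnfSat M F') :
    (superRedundant F c ↔ superRedundant (F ∪ F') c) := by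
  classical
  constructor
  · intro h M hM
    apply h M
    intro d hd
    apply hM
    refine ⟨?_, hd.2⟩
    have hsub : (↑F : Set Clause) ⊆ ↑(F ∪ F') := by
      intro x hx
      exact Finset.mem_coe.mpr (Finset.mem_union_left _ (Finset.mem_coe.mp hx))
    exact deriv_mono hsub hd.1
  · intro h M hM
    obtain ⟨M', hM'⟩ := hsat
    set M'' : ℕ → Bool := fun v => if v ∈ cnfVars F' then M' v else M v with hM''def
    have hagreeF : ∀ v, v ∈ cnfVars F → M'' v = M v := by
      intro v hv
      have : v ∉ cnfVars F' := fun h' => Set.disjoint_left.mp hdisj hv h'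
      simp [hM''def, this]
    have hsatM'' : setSat M'' (ResCn ↑(F ∪ F') \ {c}) := by
      rintro d ⟨hdD, hdne⟩
      rcases deriv_split hdisj hdD with hd | hd
      · obtain ⟨l, hl, hls⟩ := hM d ⟨hd, hdne⟩
        refine ⟨l, hl, ?_⟩
        have hvF : l.1 ∈ cnfVars F := deriv_vars hd l.1 l.2 (by simpa using hl)
        unfold litSat
        rw [hagreeF l.1 hvF]
        exact hls
      · obtain ⟨l, hl, hls⟩ := deriv_sound (S := ↑F') (M := M') hM' hd
        refine ⟨l, hl, ?_⟩
        have hvF' : l.1 ∈ cnfVars F' := deriv_vars hd l.1 l.2 (by simpa using hl)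
        unfold litSat
        simp only [hM''def, hvF', if_pos]
        exact hls
    obtain ⟨l, hl, hls⟩ := h M'' hsatM''
    refine ⟨l, hl, ?_⟩
    have hvF : l.1 ∈ cnfVars F := ⟨c, hc, l.2, by simpa using hl⟩
    unfold litSat at hls ⊢
    rw [← hagreeF l.1 hvF]
    exact hls
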